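/- e^{-2Bn} · Σ_{k=1}^{n} X_{k-1} X_k converges P-almost surely to e^{B} w² / (e^{2B} - 1) as n → ∞. -/

import Mathlib

open MeasureTheory Filter Real

lemma geom_weighted_tendsto {r : ℝ} (hr : 1 < r) {c : ℕ → ℝ} {L : ℝ}
    (hc : Filter.Tendsto c atTop (nhds L)) :
    Filter.Tendsto (fun n : ℕ => (r ^ n)⁻¹ * ∑ k ∈ Finset.range n, r ^ k * c k)
      atTop (nhds (L / (r - 1))) := by
  have hr0 : 0 < r := lt_trans one_pos hr
  have hrinv : |r⁻¹| < 1 := by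
    rw [abs_of_pos (inv_pos.2 hr0)]
    exact inv_lt_one_of_one_lt₀ hr
  -- bound on |c|
  obtain ⟨M, hM⟩ : ∃ M, ∀ k, |c k| ≤ M := by
    obtain ⟨M, hM⟩ := hc.abs.bddAbove_range
    exact ⟨M, fun k => hM ⟨k, rfl⟩⟩
  set F : ℕ → ℕ → ℝ := fun n j => if j < n then (r ^ (j + 1))⁻¹ * c (n - 1 - j) else 0
  have key : ∀ n : ℕ, (∑' j, F n j) = (r ^ n)⁻¹ * ∑ k ∈ Finset.range n, r ^ k * c k := by
    intro n
    rw [tsum_eq_sum (s := Finset.range n) (by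
      intro j hj
      simp only [F]
      rw [if_neg (by simp at hj; omega)])]
    have h1 : ∀ j ∈ Finset.range n, F n j = (r ^ (j + 1))⁻¹ * c (n - 1 - j) := by
      intro j hj
      simp only [F, if_pos (Finset.mem_range.mp hj)]
    rw [Finset.sum_congr rfl h1]
    rw [← Finset.sum_range_reflect (fun j => (r ^ (j + 1))⁻¹ * c (n - 1 - j)) n]
    rw [Finset.mul_sum]
    apply Finset.sum_congr rfl
    intro k hk
    have hk' := Finset.mem_range.mp hk
    have h2 : n - 1 - (n - 1 - k) = k := by omega
    have h3 : n - 1 - k + 1 = n - k := by omega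
    rw [h2, h3]
    have h4 : r ^ (n - k) * r ^ k = r ^ n := by
      rw [← pow_add]; congr 1; omega
    have : (r ^ (n - k))⁻¹ = (r ^ n)⁻¹ * r ^ k := by
      field_simp
      exact h4.symm
    rw [this, mul_assoc]
  have hsum : Summable (fun j : ℕ => M * (r⁻¹) ^ (j + 1)) := by
    apply Summable.mul_left
    exact ((summable_geometric_of_lt_one (by positivity) (by
      rwa [abs_of_pos (inv_pos.2 hr0)] at hrinv)).comp_injective (add_left_injective 1))
  have hab : ∀ j : ℕ, Filter.Tendsto (fun n => F n j) atTop (nhds ((r ^ (j + 1))⁻¹ * L)) := by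
    intro j
    have h1 : Filter.Tendsto (fun n : ℕ => (r ^ (j + 1))⁻¹ * c (n - 1 - j)) atTop
        (nhds ((r ^ (j + 1))⁻¹ * L)) := by
      apply Filter.Tendsto.const_mul
      have : Filter.Tendsto (fun n : ℕ => n - 1 - j) atTop atTop := by
        simpa [Nat.sub_sub] using tendsto_sub_atTop_nat (1 + j)
      exact hc.comp this
    apply h1.congr'
    filter_upwards [eventually_gt_atTop j] with n hn
    simp only [F, if_pos hn]
  have hbound : ∀ᶠ n in atTop, ∀ j, ‖F n j‖ ≤ M * (r⁻¹) ^ (j + 1) := by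
    apply Filter.Eventually.of_forall
    intro n j
    simp only [F]
    split
    · rw [norm_mul, inv_pow]
      rw [Real.norm_eq_abs, Real.norm_eq_abs, abs_of_pos (by positivity : (0:ℝ) < (r ^ (j+1))⁻¹)]
      rw [mul_comm M]
      exact mul_le_mul_of_nonneg_left (hM _) (by positivity)
    · have hM0 : (0:ℝ) ≤ M := le_trans (abs_nonneg _) (hM 0)
      simp only [norm_zero]
      exact mul_nonneg hM0 (by positivity)
  have := tendsto_tsum_of_dominated_convergence hsum hab hbound
  have htsum : (∑' j : ℕ, (r ^ (j + 1))⁻¹ * L) = L / (r - 1) := by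
    have h0 : ∀ j : ℕ, (r ^ (j + 1))⁻¹ * L = L * r⁻¹ * (r⁻¹) ^ j := by
      intro j
      rw [pow_succ, mul_inv, inv_pow]
      ring
    simp_rw [h0]
    rw [tsum_mul_left, tsum_geometric_of_lt_one (by positivity)
      (inv_lt_one_of_one_lt₀ hr)]
    have hr1 : r - 1 ≠ 0 := by linarith
    have hrne : r ≠ 0 := ne_of_gt hr0
    field_simp
  rw [htsum] at this
  exact this.congr (fun n => key n)

theorem cls_sum_prod_tendsto
    {Ω : Type*} [MeasurableSpace Ω] (P : Measure Ω) [IsProbabilityMeasure P]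
    (B : ℝ) (hB : 0 < B)
    (X : ℕ → Ω → ℝ) (hXmeas : ∀ n, Measurable (X n)) (hXnonneg : ∀ n ω, 0 ≤ X n ω)
    (w : Ω → ℝ) (hwmeas : Measurable w)
    (hconv : ∀ᵐ ω ∂P,
      Tendsto (fun n : ℕ => Real.exp (-B * n) * X n ω) atTop (nhds (w ω))) :
    ∀ᵐ ω ∂P,
      Tendsto (fun n : ℕ =>
          Real.exp (-(2 * B) * n) * ∑ k ∈ Finset.range n, X k ω * X (k + 1) ω)
        atTop (nhds (Real.exp B * (w ω) ^ 2 / (Real.exp (2 * B) - 1))) := by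
  filter_upwards [hconv] with ω hω
  set r : ℝ := Real.exp (2 * B) with hr_def
  have hr : 1 < r := by
    rw [hr_def, ← Real.exp_zero]
    exact Real.exp_lt_exp.mpr (by linarith)
  have hrpow : ∀ k : ℕ, r ^ k = Real.exp (2 * B * k) := by
    intro k
    rw [mul_comm (2 * B) (k : ℝ), Real.exp_nat_mul]
  have hc : Tendsto (fun k : ℕ =>
      (Real.exp (-B * k) * X k ω) * (Real.exp (-B * (k + 1 : ℕ)) * X (k + 1) ω))
      atTop (nhds (w ω * w ω)) :=
    hω.mul (hω.comp (tendsto_add_atTop_nat 1))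
  have h1 := (geom_weighted_tendsto hr hc).const_mul (Real.exp B)
  have hval : Real.exp B * (w ω * w ω / (r - 1))
      = Real.exp B * (w ω) ^ 2 / (Real.exp (2 * B) - 1) := by
    rw [hr_def, pow_two]; ring
  rw [hval] at h1
  apply h1.congr
  intro n
  have hterm : ∀ k ∈ Finset.range n,
      r ^ k * ((Real.exp (-B * k) * X k ω) * (Real.exp (-B * (k + 1 : ℕ)) * X (k + 1) ω))
        = Real.exp (-B) * (X k ω * X (k + 1) ω) := by
    intro k _
    have he : Real.exp (2 * B * k) * Real.exp (-B * k) * Real.exp (-B * (k + 1 : ℕ))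
        = Real.exp (-B) := by
      rw [← Real.exp_add, ← Real.exp_add]
      congr 1
      push_cast
      ring
    calc r ^ k * ((Real.exp (-B * k) * X k ω) * (Real.exp (-B * (k + 1 : ℕ)) * X (k + 1) ω))
        = (Real.exp (2 * B * k) * Real.exp (-B * k) * Real.exp (-B * (k + 1 : ℕ)))
            * (X k ω * X (k + 1) ω) := by rw [hrpow]; ring
      _ = Real.exp (-B) * (X k ω * X (k + 1) ω) := by rw [he]
  rw [Finset.sum_congr rfl hterm, ← Finset.mul_sum]
  have hrn : (r ^ n)⁻¹ = Real.exp (-(2 * B) * n) := by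
    rw [hrpow, ← Real.exp_neg]
    ring_nf
  rw [hrn]
  have hBB : Real.exp B * Real.exp (-B) = 1 := by
    rw [← Real.exp_add]; simp
  calc Real.exp B * (Real.exp (-(2 * B) * n) * (Real.exp (-B) * ∑ k ∈ Finset.range n, X k ω * X (k + 1) ω))
      = (Real.exp B * Real.exp (-B)) * (Real.exp (-(2 * B) * n) * ∑ k ∈ Finset.range n, X k ω * X (k + 1) ω) := by ring
    _ = Real.exp (-(2 * B) * n) * ∑ k ∈ Finset.range n, X k ω * X (k + 1) ω := by rw [hBB, one_mul]
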